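/- If f, h ∈ SL(2,C) and tr²(f) = 2, then |tr[f, h f h⁻¹] − 1| = |tr[f,h] − 1|². -/

import Mathlib

open Matrix Complex
open scoped commutatorElement

noncomputable def tr (M : Matrix.SpecialLinearGroup (Fin 2) ℂ) : ℂ :=
  Matrix.trace (M : Matrix (Fin 2) (Fin 2) ℂ)

theorem trace_identity_aux (f h : Matrix.SpecialLinearGroup (Fin 2) ℂ) :
    tr ⁅f, h * f * h⁻¹⁆ = (tr ⁅f, h⁆ - 2) * (tr ⁅f, h⁆ - (tr f) ^ 2 + 2) + 2 := by
  have hA := f.2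
  have hB := h.2
  rw [Matrix.det_fin_two] at hA hB
  set a := (f : Matrix (Fin 2) (Fin 2) ℂ) 0 0 with ha
  set b := (f : Matrix (Fin 2) (Fin 2) ℂ) 0 1 with hb
  set c := (f : Matrix (Fin 2) (Fin 2) ℂ) 1 0 with hc
  set d := (f : Matrix (Fin 2) (Fin 2) ℂ) 1 1 with hd
  set e := (h : Matrix (Fin 2) (Fin 2) ℂ) 0 0 with he
  set m := (h : Matrix (Fin 2) (Fin 2) ℂ) 0 1 with hm
  set n := (h : Matrix (Fin 2) (Fin 2) ℂ) 1 0 with hn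
  set p := (h : Matrix (Fin 2) (Fin 2) ℂ) 1 1 with hp
  simp only [tr, commutatorElement_def, Matrix.SpecialLinearGroup.coe_mul,
    Matrix.SpecialLinearGroup.coe_inv, Matrix.adjugate_fin_two,
    Matrix.trace_fin_two, Matrix.mul_apply, Fin.sum_univ_two,
    Matrix.cons_val', Matrix.cons_val_zero, Matrix.cons_val_one,
    Matrix.head_cons, Matrix.head_fin_const, Matrix.of_apply,
    Matrix.empty_val', Matrix.cons_val_fin_one,
    ← ha, ← hb, ← hc, ← hd, ← he, ← hm, ← hn, ← hp]
  linear_combination ((-4) + (-2)*m*n + (4)*e*p + (2)*e*m*n*p + (-2)*e^2*p^2 + (-2)*d^2*m*n + (2)*d^2*e*p + (1)*c*d*m*p + (1)*c*d*m^2*n*p + (-1)*c*d*e*m + (-1)*c*d*e*m*p^2 + (-1)*c*d*e*m^2*n + (1)*c*d*e^2*m*p + (2)*c^2*m^2 + (2)*c^2*m^3*n + (-2)*c^2*e*m^2*p + (1)*b*d*n*p + (1)*b*d*m*n^2*p + (-1)*b*d*e*n + (-1)*b*d*e*n*p^2 + (-1)*b*d*e*m*n^2 + (1)*b*d*e^2*n*p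 + (-2)*b*c*p^2 + (-2)*b*c*m*n + (-2)*b*c*m*n*p^2 + (4)*b*c*e*p + (2)*b*c*e*p^3 + (2)*b*c*e*m*n*p + (-2)*b*c*e^2 + (-2)*b*c*e^2*p^2 + (-2)*b*c*e^2*m*n + (2)*b*c*e^3*p + (2)*b^2*n^2 + (2)*b^2*m*n^3 + (-2)*b^2*e*n^2*p + (-2)*a*d*m*n + (4)*a*d*e*p + (2)*a*d*e*m*n*p + (-2)*a*d*e^2*p^2 + (-1)*a*c*m*p + (-1)*a*c*m^2*n*p + (1)*a*c*e*m + (1)*a*c*e*m*p^2 + (1)*a*c*e*m^2*n + (-1)*a*c*e^2*m*p + (-1)*a*b*n*p + (-1)*a*b*m*n^2*p + (1)*a*b*e*n + (1)*a*b*e*n*p^2 + (1)*a*b*e*m*n^2 + (-1)*a*b*e^2*n*p + (-2)*a^2*m*n + (2)*a^2*e*p) * hA + ((2) + (-2)*e*p + (2)*d^2 + (1)*d^4*m*n + (-1)*c*d*m*p + (1)*c*d*e*m + (-1)*c*d^3*m*p + (1)*c*d^3*e*m + (-2)*c^2*m^2 + (-1)*c^2*d^2*m^2 + (-1)*b*d*n*p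 + (1)*b*d*e*n + (-1)*b*d^3*n*p + (1)*b*d^3*e*n + (4)*b*c + (2)*b*c*p^2 + (-4)*b*c*e*p + (2)*b*c*e^2 + (1)*b*c*d^2*p^2 + (2)*b*c*d^2*m*n + (-2)*b*c*d^2*e*p + (1)*b*c*d^2*e^2 + (-1)*b*c^2*d*m*p + (1)*b*c^2*d*e*m + (-2)*b*c^3*m^2 + (-2)*b^2*n^2 + (-1)*b^2*d^2*n^2 + (-1)*b^2*c*d*n*p + (1)*b^2*c*d*e*n + (2)*b^2*c^2*p^2 + (2)*b^2*c^2*m*n + (-4)*b^2*c^2*e*p + (2)*b^2*c^2*e^2 + (-2)*b^3*c*n^2 + (1)*a*c*m*p + (-1)*a*c*e*m + (1)*a*b*n*p + (-1)*a*b*e*n + (1)*a*b*c^2*m*p + (-1)*a*b*c^2*e*m + (1)*a*b^2*c*n*p + (-1)*a*b^2*c*e*n + (2)*a^2 + (-1)*a^2*c^2*m^2 + (1)*a^2*b*c*p^2 + (2)*a^2*b*c*m*n + (-2)*a^2*b*c*e*p + (1)*a^2*b*c*e^2 + (-1)*a^2*b^2*n^2 + (1)*a^3*c*m*p + (-1)*a^3*c*e*m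 + (1)*a^3*b*n*p + (-1)*a^3*b*e*n + (1)*a^4*m*n) * hB

theorem abs_trace_comm_conj (f h : Matrix.SpecialLinearGroup (Fin 2) ℂ)
    (hf : (tr f) ^ 2 = 2) :
    ‖tr ⁅f, h * f * h⁻¹⁆ - 1‖ = (‖tr ⁅f, h⁆ - 1‖) ^ 2 := by
  have key : tr ⁅f, h * f * h⁻¹⁆ - 1 = (tr ⁅f, h⁆ - 1) ^ 2 := by
    rw [trace_identity_aux f h, hf]
    ring
  rw [key, norm_pow]
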